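/- For every integer k ≥ 0 and every complex number x with |x| < 1, one has ∑_{n=1}^∞ n^k x^n = x A_k(x) / (1 - x)^{k+1}. -/

import Mathlib

lemma aux_binom (k : ℕ) (t : ℂ) :
    t ^ (k+1) - (t - 1) ^ (k+1)
      = ∑ j ∈ Finset.range (k+1), ((k+1).choose j : ℂ) * (-1) ^ (k + j) * t ^ j := by
  rw [sub_pow, Finset.sum_range_succ]
  rw [show ((-1:ℂ)) ^ (k + 1 + (k + 1)) = 1 by rw [show k+1+(k+1) = 2*(k+1) by ring, pow_mul]; norm_num]
  rw [Nat.choose_self]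
  push_cast
  simp only [one_pow, one_mul, mul_one]
  rw [show t ^ (k+1) - (∑ j ∈ Finset.range (k+1), (-1:ℂ) ^ (j + (k + 1)) * t ^ j * ((k+1).choose j : ℂ) + t ^ (k+1)) = -∑ j ∈ Finset.range (k+1), (-1:ℂ) ^ (j + (k + 1)) * t ^ j * ((k+1).choose j : ℂ) by ring]
  rw [← Finset.sum_neg_distrib]
  refine Finset.sum_congr rfl fun j hj => ?_
  rw [show j + (k+1) = (k + j) + 1 by ring, pow_succ]
  ring

lemma aux_summable (k : ℕ) (x : ℂ) (hx : ‖x‖ < 1) :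
    Summable (fun n : ℕ => ((n : ℂ) + 1) ^ k * x ^ (n + 1)) := by
  have hx' : ‖x‖ < 1 := by exact hx
  have h := summable_pow_mul_geometric_of_norm_lt_one (R := ℂ) k hx'
  have h2 := (summable_nat_add_iff 1).2 h
  refine h2.congr fun n => ?_
  push_cast
  ring

lemma aux_rec (k : ℕ) (x : ℂ) (hx : ‖x‖ < 1) :
    (1 - x) * ∑' n : ℕ, ((n : ℂ) + 1) ^ (k+1) * x ^ (n + 1)
      = ∑ j ∈ Finset.range (k+1), ((k+1).choose j : ℂ) * (-1) ^ (k + j)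
          * ∑' n : ℕ, ((n : ℂ) + 1) ^ j * x ^ (n + 1) := by
  have hx' : ‖x‖ < 1 := by exact hx
  have hS : ∀ j : ℕ, Summable (fun n : ℕ => ((n : ℂ) + 1) ^ j * x ^ (n + 1)) :=
    fun j => aux_summable j x hx
  have hg : Summable (fun n : ℕ => (n : ℂ) ^ (k+1) * x ^ (n + 1)) := by
    have := (summable_pow_mul_geometric_of_norm_lt_one (R := ℂ) (k+1) hx').mul_left x
    refine this.congr fun n => ?_
    ring
  -- x * S = ∑' n, n^(k+1) x^(n+1)
  have hshift : ∑' n : ℕ, (n : ℂ) ^ (k+1) * x ^ (n + 1)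
      = x * ∑' n : ℕ, ((n : ℂ) + 1) ^ (k+1) * x ^ (n + 1) := by
    rw [Summable.tsum_eq_zero_add hg, ← tsum_mul_left]
    push_cast
    simp only [ne_eq, zero_pow, Nat.succ_ne_zero, not_false_iff, zero_mul, zero_add]
    refine tsum_congr fun n => ?_
    ring
  have hsub : (1 - x) * ∑' n : ℕ, ((n : ℂ) + 1) ^ (k+1) * x ^ (n + 1)
      = ∑' n : ℕ, (((n : ℂ) + 1) ^ (k+1) * x ^ (n + 1) - (n : ℂ) ^ (k+1) * x ^ (n + 1)) := by
    rw [Summable.tsum_sub (hS (k+1)) hg, hshift]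
    ring
  rw [hsub]
  have hpt : ∀ n : ℕ, ((n : ℂ) + 1) ^ (k+1) * x ^ (n + 1) - (n : ℂ) ^ (k+1) * x ^ (n + 1)
      = ∑ j ∈ Finset.range (k+1),
          ((k+1).choose j : ℂ) * (-1) ^ (k + j) * (((n : ℂ) + 1) ^ j * x ^ (n + 1)) := by
    intro n
    have := aux_binom k ((n : ℂ) + 1)
    rw [add_sub_cancel_right] at this
    calc ((n : ℂ) + 1) ^ (k+1) * x ^ (n + 1) - (n : ℂ) ^ (k+1) * x ^ (n + 1)
        = (((n : ℂ) + 1) ^ (k+1) - (n : ℂ) ^ (k+1)) * x ^ (n + 1) := by ring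
      _ = (∑ j ∈ Finset.range (k+1),
            ((k+1).choose j : ℂ) * (-1) ^ (k + j) * ((n : ℂ) + 1) ^ j) * x ^ (n + 1) := by
          rw [this]
      _ = _ := by rw [Finset.sum_mul]; exact Finset.sum_congr rfl fun j _ => by ring
  rw [tsum_congr hpt, Summable.tsum_finsetSum fun j _ => ((hS j).mul_left _)]
  exact Finset.sum_congr rfl fun j _ => (tsum_mul_left)

/-- The Eulerian polynomials, defined recursively by `A_0(t) = 1` and
`A_k(t) = ∑_{j=0}^{k-1} binom(k,j) A_j(t) (t-1)^{k-1-j}` for `k ≥ 1`. -/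
noncomputable def eulerian : ℕ → ℂ → ℂ
  | 0, _ => 1
  | (k+1), t => ∑ j ∈ (Finset.range (k+1)).attach,
      ((k+1).choose j.1 : ℂ) * eulerian j.1 t * (t - 1) ^ (k - j.1)
  decreasing_by exact Finset.mem_range.mp j.2

/-- For every integer `k ≥ 0` and complex `x` with `|x| < 1`,
`∑_{n=1}^∞ n^k x^n = x A_k(x) / (1-x)^{k+1}`. -/
theorem eulerian_generating_function (k : ℕ) (x : ℂ) (hx : ‖x‖ < 1) :
    ∑' n : ℕ, ((n : ℂ) + 1) ^ k * x ^ (n + 1)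
    = x * eulerian k x / (1 - x) ^ (k + 1) := by
  have h1 : (1 : ℂ) - x ≠ 0 := by
    intro h
    have : x = 1 := by linear_combination -h
    rw [this] at hx
    simp at hx
  induction k using Nat.strong_induction_on with
  | _ k IH =>
    match k with
    | 0 =>
      simp only [pow_zero, one_mul, eulerian, mul_one, pow_one]
      have hx' : ‖x‖ < 1 := by exact hx
      calc ∑' n : ℕ, x ^ (n + 1) = ∑' n : ℕ, x * x ^ n := by
            exact tsum_congr fun n => by rw [pow_succ]; ring
        _ = x * ∑' n : ℕ, x ^ n := tsum_mul_left
        _ = x * (1 - x)⁻¹ := by rw [tsum_geometric_of_norm_lt_one hx']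
        _ = x / (1 - x) := by rw [div_eq_mul_inv]
        _ = x / (1 - x) ^ (0 + 1) := by norm_num
    | (m+1) =>
      have hrec := aux_rec m x hx
      have hIH : ∀ j ∈ Finset.range (m+1),
          ((m+1).choose j : ℂ) * (-1) ^ (m + j) * ∑' n : ℕ, ((n : ℂ) + 1) ^ j * x ^ (n + 1)
          = ((m+1).choose j : ℂ) * (-1) ^ (m + j) * (x * eulerian j x / (1 - x) ^ (j + 1)) := by
        intro j hj
        rw [IH j (Finset.mem_range.mp hj)]
      rw [Finset.sum_congr rfl hIH] at hrec
      -- now turn the RHS sum into x * eulerian (m+1) x / (1-x)^(m+1)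
      have hE : eulerian (m+1) x = ∑ j ∈ Finset.range (m+1),
          ((m+1).choose j : ℂ) * eulerian j x * (x - 1) ^ (m - j) := by
        rw [eulerian]
        exact Finset.sum_attach (Finset.range (m+1))
          (fun j => ((m+1).choose j : ℂ) * eulerian j x * (x - 1) ^ (m - j))
      have hterm : ∀ j ∈ Finset.range (m+1),
          ((m+1).choose j : ℂ) * (-1) ^ (m + j) * (x * eulerian j x / (1 - x) ^ (j + 1))
          = x * (((m+1).choose j : ℂ) * eulerian j x * (x - 1) ^ (m - j)) / (1 - x) ^ (m + 1) := by
        intro j hj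
        have hj' : j ≤ m := Nat.lt_succ_iff.mp (Finset.mem_range.mp hj)
        have hsplit : ((1:ℂ) - x) ^ (m + 1) = (1 - x) ^ (j + 1) * (1 - x) ^ (m - j) := by
          rw [← pow_add]; congr 1; omega
        have hx1 : (x - 1) ^ (m - j) = (-1) ^ (m - j) * (1 - x) ^ (m - j) := by
          rw [show x - 1 = -(1 - x) by ring, neg_pow]
        have hsign : ((-1 : ℂ)) ^ (m + j) = (-1) ^ (m - j) := by
          rw [show m + j = (m - j) + 2 * j by omega, pow_add, pow_mul]
          norm_num
        rw [hx1, hsign, hsplit]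
        have hne : ((1:ℂ) - x) ^ (j+1) ≠ 0 := pow_ne_zero _ h1
        have hne2 : ((1:ℂ) - x) ^ (m-j) ≠ 0 := pow_ne_zero _ h1
        field_simp
      rw [Finset.sum_congr rfl hterm, ← Finset.sum_div, ← Finset.mul_sum, ← hE] at hrec
      rw [show (m + 1 + 1) = (m + 1) + 1 from rfl, pow_succ]
      rw [eq_comm, div_eq_iff (by exact mul_ne_zero (pow_ne_zero _ h1) h1)]
      calc x * eulerian (m+1) x
          = (x * eulerian (m+1) x / (1 - x) ^ (m + 1)) * (1 - x) ^ (m + 1) := by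
            field_simp
        _ = ((1 - x) * ∑' n : ℕ, ((n : ℂ) + 1) ^ (m+1) * x ^ (n + 1)) * (1 - x) ^ (m + 1) := by
            rw [hrec]
        _ = _ := by ring
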